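/- Let A = {A_a}_{a∈Ω_A} and B = {B_b}_{b∈Ω_B} be POVMs on a Hilbert space H. For any POVM F = {F_x}_{x∈Ω} and functions f_A: Ω → Ω_A, f_B: Ω → Ω_B, with α := max_a ‖f_A(F)_a - A_a‖, β := max_b ‖f_B(F)_b - B_b‖, V(A) := max_a ‖A_a - A_a²‖, V(B) := max_b ‖B_b - B_b²‖, the following holds: 2αβ + α + β + 2(2α + V(A))^{1/2}(2β + V(B))^{1/2} ≥ max_{a,b} ‖[A_a, B_b]‖. -/

import Mathlib

private noncomputable def posCore {H : Type*} [NormedAddCommGroup H] [InnerProductSpace ℂ H]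
    [CompleteSpace H] (T : H →L[ℂ] H) (hT : T.IsPositive) : PreInnerProductSpace.Core ℂ H where
  inner := fun x y => (inner ℂ x (T y) : ℂ)
  conj_inner_symm := fun x y =>
    (inner_conj_symm (T x) y).trans
      (by simpa using (ContinuousLinearMap.isSelfAdjoint_iff_isSymmetric.mp hT.isSelfAdjoint) x y)
  re_inner_nonneg := fun x => hT.re_inner_nonneg_right x
  add_left := fun x y z => inner_add_left x y (T z)
  smul_left := fun x y r => inner_smul_left x (T y) r

/-- Cauchy–Schwarz for the semi-inner ℂ product induced by a positive operator. -/
private lemma posCS {H : Type*} [NormedAddCommGroup H] [InnerProductSpace ℂ H]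
    [CompleteSpace H] (T : H →L[ℂ] H) (hT : T.IsPositive) (u v : H) :
    ‖(inner ℂ u (T v) : ℂ)‖ ≤
      Real.sqrt (RCLike.re (inner ℂ u (T u) : ℂ)) * Real.sqrt (RCLike.re (inner ℂ v (T v) : ℂ)) := by
  have hsym := (ContinuousLinearMap.isSelfAdjoint_iff_isSymmetric.mp hT.isSelfAdjoint)
  have key : ‖(inner ℂ u (T v) : ℂ)‖ * ‖(inner ℂ v (T u) : ℂ)‖ ≤
      RCLike.re (inner ℂ u (T u) : ℂ) * RCLike.re (inner ℂ v (T v) : ℂ) :=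
    @InnerProductSpace.Core.inner_mul_inner_self_le ℂ H _ _ _ (posCore T hT) u v
  have h1 : (inner ℂ (T u) v : ℂ) = inner ℂ u (T v) := by simpa using hsym u v
  have hvu : ‖(inner ℂ v (T u) : ℂ)‖ = ‖(inner ℂ u (T v) : ℂ)‖ := by
    rw [← h1, norm_inner_symm]
  have key2 : ‖(inner ℂ u (T v) : ℂ)‖ ^ 2 ≤
      RCLike.re (inner ℂ u (T u) : ℂ) * RCLike.re (inner ℂ v (T v) : ℂ) := by
    rw [sq]
    calc ‖(inner ℂ u (T v) : ℂ)‖ * ‖(inner ℂ u (T v) : ℂ)‖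
        = ‖(inner ℂ u (T v) : ℂ)‖ * ‖(inner ℂ v (T u) : ℂ)‖ := by rw [hvu]
      _ ≤ _ := key
  calc ‖(inner ℂ u (T v) : ℂ)‖ = Real.sqrt (‖(inner ℂ u (T v) : ℂ)‖ ^ 2) := by
        rw [Real.sqrt_sq (norm_nonneg _)]
    _ ≤ Real.sqrt (RCLike.re (inner ℂ u (T u) : ℂ) * RCLike.re (inner ℂ v (T v) : ℂ)) :=
        Real.sqrt_le_sqrt key2
    _ = _ := Real.sqrt_mul (hT.re_inner_nonneg_right u) _


/-- A self-adjoint operator whose quadratic form is bounded by `c * ‖x‖²` has norm at most `c`. -/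
private lemma norm_le_of_sa_bound {H : Type*} [NormedAddCommGroup H] [InnerProductSpace ℂ H]
    [CompleteSpace H] (T : H →L[ℂ] H) (hT : IsSelfAdjoint T) {c : ℝ} (hc : 0 ≤ c)
    (h : ∀ x : H, |RCLike.re (inner ℂ x (T x) : ℂ)| ≤ c * ‖x‖ ^ 2) : ‖T‖ ≤ c := by
  have hsym := (ContinuousLinearMap.isSelfAdjoint_iff_isSymmetric.mp hT)
  have par : ∀ w z : H, 4 * RCLike.re (inner ℂ w (T z) : ℂ) =
      RCLike.re (inner ℂ (w + z) (T (w + z)) : ℂ) - RCLike.re (inner ℂ (w - z) (T (w - z)) : ℂ) := by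
    intro w z
    have hzw : (inner ℂ z (T w) : ℂ) = starRingEnd ℂ (inner ℂ w (T z) : ℂ) := by
      rw [← inner_conj_symm]
      congr 1
      simpa using hsym w z
    have e1 : (inner ℂ (w + z) (T (w + z)) : ℂ) =
        inner ℂ w (T w) + inner ℂ w (T z) + inner ℂ z (T w) + inner ℂ z (T z) := by
      rw [map_add]
      simp [inner_add_left, inner_add_right]
      ring
    have e2 : (inner ℂ (w - z) (T (w - z)) : ℂ) =
        inner ℂ w (T w) - inner ℂ w (T z) - inner ℂ z (T w) + inner ℂ z (T z) := by
      rw [map_sub]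
      simp [inner_sub_left, inner_sub_right]
      ring
    rw [e1, e2, hzw]
    simp only [map_add, map_sub, RCLike.conj_re]
    ring
  refine T.opNorm_le_bound hc fun y => ?_
  by_cases hTy : T y = 0
  · simp [hTy]
    exact mul_nonneg hc (norm_nonneg y)
  have hTy' : (0:ℝ) < ‖T y‖ := norm_pos_iff.mpr hTy
  set r : ℝ := ‖y‖ / ‖T y‖ with hr
  set x : H := ((r : ℂ)) • T y with hx
  have hre : RCLike.re (inner ℂ x (T y) : ℂ) = r * ‖T y‖ ^ 2 := by
    rw [hx, inner_smul_left, inner_self_eq_norm_sq_to_K]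
    simp [Complex.conj_ofReal, ← Complex.ofReal_pow, ← Complex.ofReal_mul]
  have hxnorm : ‖x‖ = ‖y‖ := by
    rw [hx, norm_smul]
    simp [hr, abs_div, abs_of_nonneg (norm_nonneg y), abs_of_nonneg (norm_nonneg (T y))]
    field_simp
  have hb : 4 * (r * ‖T y‖ ^ 2) ≤ c * ‖x + y‖ ^ 2 + c * ‖x - y‖ ^ 2 := by
    rw [← hre]
    have := par x y
    have h1 := h (x + y)
    have h2 := h (x - y)
    have := abs_le.mp h1
    have := abs_le.mp h2
    linarith [abs_le.mp h1, abs_le.mp h2, par x y]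
  have hpar : ‖x + y‖ ^ 2 + ‖x - y‖ ^ 2 = 2 * (‖x‖ ^ 2 + ‖y‖ ^ 2) := by
    simpa [pow_two] using parallelogram_law_with_norm ℂ x y
  have hfin : 4 * (r * ‖T y‖ ^ 2) ≤ 4 * (c * ‖y‖ ^ 2) := by
    calc 4 * (r * ‖T y‖ ^ 2) ≤ c * (‖x + y‖ ^ 2 + ‖x - y‖ ^ 2) := by linarith
      _ = c * (2 * (‖x‖ ^ 2 + ‖y‖ ^ 2)) := by rw [hpar]
      _ = 4 * (c * ‖y‖ ^ 2) := by rw [hxnorm]; ring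
  have hry : r * ‖T y‖ ^ 2 = ‖y‖ * ‖T y‖ := by
    rw [hr]; field_simp
  rw [hry] at hfin
  by_cases hy : y = 0
  · exact absurd (by simp [hy]) hTy
  have hy' : (0:ℝ) < ‖y‖ := norm_pos_iff.mpr hy
  nlinarith


private lemma sum_isPositive {H : Type*} [NormedAddCommGroup H] [InnerProductSpace ℂ H]
    [CompleteSpace H] {Ω : Type*} (s : Finset Ω) (F : Ω → H →L[ℂ] H)
    (h : ∀ x, (F x).IsPositive) : (∑ x ∈ s, F x).IsPositive :=
  Finset.sum_induction F _ (fun _ _ ha hb => ha.add hb)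
    ContinuousLinearMap.isPositive_zero (fun x _ => h x)

private lemma core_bound {H : Type*} [NormedAddCommGroup H] [InnerProductSpace ℂ H]
    [CompleteSpace H] {Ω : Type*} [Fintype Ω] (F : Ω → H →L[ℂ] H)
    (hFpos : ∀ x, (F x).IsPositive) (hFsum : ∑ x, F x = 1)
    (P Q : Ω → Prop) [DecidablePred P] [DecidablePred Q] :
    ‖(∑ x ∈ Finset.univ.filter P, F x) * (∑ x ∈ Finset.univ.filter Q, F x) -
        ∑ x ∈ Finset.univ.filter (fun x => P x ∧ Q x), F x‖ ≤
      Real.sqrt ‖(∑ x ∈ Finset.univ.filter P, F x) -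
          (∑ x ∈ Finset.univ.filter P, F x) * (∑ x ∈ Finset.univ.filter P, F x)‖ *
      Real.sqrt ‖(∑ x ∈ Finset.univ.filter Q, F x) -
          (∑ x ∈ Finset.univ.filter Q, F x) * (∑ x ∈ Finset.univ.filter Q, F x)‖ := by
  set A' := ∑ x ∈ Finset.univ.filter P, F x with hA'
  set B' := ∑ x ∈ Finset.univ.filter Q, F x with hB'
  set G := ∑ x ∈ Finset.univ.filter (fun x => P x ∧ Q x), F x with hG
  set T := A' * B' - G with hT
  set KA := Real.sqrt ‖A' - A' * A'‖ with hKA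
  set KB := Real.sqrt ‖B' - B' * B'‖ with hKB
  have hKA0 : 0 ≤ KA := Real.sqrt_nonneg _
  have hKB0 : 0 ≤ KB := Real.sqrt_nonneg _
  have hFsum_apply : ∀ w : H, ∑ x, F x w = w := by
    intro w
    rw [← ContinuousLinearMap.sum_apply, hFsum, ContinuousLinearMap.one_apply]
  have hA'_apply : ∀ w : H, ∑ x ∈ Finset.univ.filter P, F x w = A' w := by
    intro w; rw [hA', ContinuousLinearMap.sum_apply]
  have hB'_apply : ∀ w : H, ∑ x ∈ Finset.univ.filter Q, F x w = B' w := by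
    intro w; rw [hB', ContinuousLinearMap.sum_apply]
  have hG_apply : ∀ w : H, ∑ x ∈ Finset.univ.filter (fun x => P x ∧ Q x), F x w = G w := by
    intro w; rw [hG, ContinuousLinearMap.sum_apply]
  have main : ∀ φ ψ : H, ‖(inner ℂ φ (T ψ) : ℂ)‖ ≤ KA * KB * (‖φ‖ * ‖ψ‖) := by
    intro φ ψ
    set u : Ω → H := fun x => A' φ - (if P x then φ else 0) with hu
    set v : Ω → H := fun x => (if Q x then ψ else 0) - B' ψ with hv
    -- the main identity
    have sumUV : ∑ x, (inner ℂ (u x) (F x (v x)) : ℂ) = inner ℂ φ (T ψ) := by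
      have e : ∀ x : Ω, (inner ℂ (u x) (F x (v x)) : ℂ) =
          (if Q x then (inner ℂ (A' φ) (F x ψ) : ℂ) else 0)
            - inner ℂ (A' φ) (F x (B' ψ))
            - (if P x ∧ Q x then (inner ℂ φ (F x ψ) : ℂ) else 0)
            + (if P x then (inner ℂ φ (F x (B' ψ)) : ℂ) else 0) := by
        intro x
        by_cases hP : P x <;> by_cases hQ : Q x <;>
          simp [hu, hv, hP, hQ, inner_sub_left, inner_sub_right, map_sub] <;> ring
      rw [Finset.sum_congr rfl fun x _ => e x]
      rw [Finset.sum_add_distrib, Finset.sum_sub_distrib, Finset.sum_sub_distrib]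
      have p1 : ∑ x, (if Q x then (inner ℂ (A' φ) (F x ψ) : ℂ) else 0)
          = inner ℂ (A' φ) (B' ψ) := by
        rw [← Finset.sum_filter, ← inner_sum, hB'_apply]
      have p2 : ∑ x, (inner ℂ (A' φ) (F x (B' ψ)) : ℂ) = inner ℂ (A' φ) (B' ψ) := by
        rw [← inner_sum, hFsum_apply]
      have p3 : ∑ x, (if P x ∧ Q x then (inner ℂ φ (F x ψ) : ℂ) else 0)
          = inner ℂ φ (G ψ) := by
        rw [← Finset.sum_filter, ← inner_sum, hG_apply]
      have p4 : ∑ x, (if P x then (inner ℂ φ (F x (B' ψ)) : ℂ) else 0)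
          = inner ℂ φ (A' (B' ψ)) := by
        rw [← Finset.sum_filter, ← inner_sum, hA'_apply]
      rw [p1, p2, p3, p4, hT]
      simp only [ContinuousLinearMap.sub_apply, ContinuousLinearMap.mul_apply, inner_sub_right]
      ring
    have sumU : ∑ x, (inner ℂ (u x) (F x (u x)) : ℂ)
        = inner ℂ φ (A' φ) - inner ℂ φ (A' (A' φ)) := by
      have e : ∀ x : Ω, (inner ℂ (u x) (F x (u x)) : ℂ) =
          inner ℂ (A' φ) (F x (A' φ))
            - (if P x then (inner ℂ (A' φ) (F x φ) : ℂ) else 0)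
            - (if P x then (inner ℂ φ (F x (A' φ)) : ℂ) else 0)
            + (if P x then (inner ℂ φ (F x φ) : ℂ) else 0) := by
        intro x
        by_cases hP : P x <;>
          simp [hu, hP, inner_sub_left, inner_sub_right, map_sub] <;> ring
      rw [Finset.sum_congr rfl fun x _ => e x]
      rw [Finset.sum_add_distrib, Finset.sum_sub_distrib, Finset.sum_sub_distrib]
      have p1 : ∑ x, (inner ℂ (A' φ) (F x (A' φ)) : ℂ) = inner ℂ (A' φ) (A' φ) := by
        rw [← inner_sum, hFsum_apply]
      have p2 : ∑ x, (if P x then (inner ℂ (A' φ) (F x φ) : ℂ) else 0)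
          = inner ℂ (A' φ) (A' φ) := by
        rw [← Finset.sum_filter, ← inner_sum, hA'_apply]
      have p3 : ∑ x, (if P x then (inner ℂ φ (F x (A' φ)) : ℂ) else 0)
          = inner ℂ φ (A' (A' φ)) := by
        rw [← Finset.sum_filter, ← inner_sum, hA'_apply]
      have p4 : ∑ x, (if P x then (inner ℂ φ (F x φ) : ℂ) else 0) = inner ℂ φ (A' φ) := by
        rw [← Finset.sum_filter, ← inner_sum, hA'_apply]
      rw [p1, p2, p3, p4]
      ring
    have sumV : ∑ x, (inner ℂ (v x) (F x (v x)) : ℂ)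
        = inner ℂ ψ (B' ψ) - inner ℂ ψ (B' (B' ψ)) := by
      have e : ∀ x : Ω, (inner ℂ (v x) (F x (v x)) : ℂ) =
          (if Q x then (inner ℂ ψ (F x ψ) : ℂ) else 0)
            - (if Q x then (inner ℂ ψ (F x (B' ψ)) : ℂ) else 0)
            - (if Q x then (inner ℂ (B' ψ) (F x ψ) : ℂ) else 0)
            + inner ℂ (B' ψ) (F x (B' ψ)) := by
        intro x
        by_cases hQ : Q x <;>
          simp [hv, hQ, inner_sub_left, inner_sub_right, map_sub] <;> ring
      rw [Finset.sum_congr rfl fun x _ => e x]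
      rw [Finset.sum_add_distrib, Finset.sum_sub_distrib, Finset.sum_sub_distrib]
      have p1 : ∑ x, (if Q x then (inner ℂ ψ (F x ψ) : ℂ) else 0) = inner ℂ ψ (B' ψ) := by
        rw [← Finset.sum_filter, ← inner_sum, hB'_apply]
      have p2 : ∑ x, (if Q x then (inner ℂ ψ (F x (B' ψ)) : ℂ) else 0)
          = inner ℂ ψ (B' (B' ψ)) := by
        rw [← Finset.sum_filter, ← inner_sum, hB'_apply]
      have p3 : ∑ x, (if Q x then (inner ℂ (B' ψ) (F x ψ) : ℂ) else 0)
          = inner ℂ (B' ψ) (B' ψ) := by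
        rw [← Finset.sum_filter, ← inner_sum, hB'_apply]
      have p4 : ∑ x, (inner ℂ (B' ψ) (F x (B' ψ)) : ℂ) = inner ℂ (B' ψ) (B' ψ) := by
        rw [← inner_sum, hFsum_apply]
      rw [p1, p2, p3, p4]
      ring
    have bu : ∑ x, RCLike.re (inner ℂ (u x) (F x (u x)) : ℂ) ≤ ‖A' - A' * A'‖ * ‖φ‖ ^ 2 := by
      rw [← map_sum, sumU]
      have hs : (inner ℂ φ (A' φ) : ℂ) - inner ℂ φ (A' (A' φ)) = inner ℂ φ ((A' - A' * A') φ) := by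
        simp [inner_sub_right, ContinuousLinearMap.sub_apply, ContinuousLinearMap.mul_apply]
      rw [hs]
      calc RCLike.re (inner ℂ φ ((A' - A' * A') φ) : ℂ)
          ≤ ‖(inner ℂ φ ((A' - A' * A') φ) : ℂ)‖ := RCLike.re_le_norm _
        _ ≤ ‖φ‖ * ‖(A' - A' * A') φ‖ := norm_inner_le_norm _ _
        _ ≤ ‖φ‖ * (‖A' - A' * A'‖ * ‖φ‖) := by
            gcongr
            exact ContinuousLinearMap.le_opNorm _ _
        _ = ‖A' - A' * A'‖ * ‖φ‖ ^ 2 := by ring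
    have bv : ∑ x, RCLike.re (inner ℂ (v x) (F x (v x)) : ℂ) ≤ ‖B' - B' * B'‖ * ‖ψ‖ ^ 2 := by
      rw [← map_sum, sumV]
      have hs : (inner ℂ ψ (B' ψ) : ℂ) - inner ℂ ψ (B' (B' ψ)) = inner ℂ ψ ((B' - B' * B') ψ) := by
        simp [inner_sub_right, ContinuousLinearMap.sub_apply, ContinuousLinearMap.mul_apply]
      rw [hs]
      calc RCLike.re (inner ℂ ψ ((B' - B' * B') ψ) : ℂ)
          ≤ ‖(inner ℂ ψ ((B' - B' * B') ψ) : ℂ)‖ := RCLike.re_le_norm _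
        _ ≤ ‖ψ‖ * ‖(B' - B' * B') ψ‖ := norm_inner_le_norm _ _
        _ ≤ ‖ψ‖ * (‖B' - B' * B'‖ * ‖ψ‖) := by
            gcongr
            exact ContinuousLinearMap.le_opNorm _ _
        _ = ‖B' - B' * B'‖ * ‖ψ‖ ^ 2 := by ring
    calc ‖(inner ℂ φ (T ψ) : ℂ)‖ = ‖∑ x, (inner ℂ (u x) (F x (v x)) : ℂ)‖ := by rw [sumUV]
      _ ≤ ∑ x, ‖(inner ℂ (u x) (F x (v x)) : ℂ)‖ := norm_sum_le _ _
      _ ≤ ∑ x, Real.sqrt (RCLike.re (inner ℂ (u x) (F x (u x)) : ℂ)) *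
            Real.sqrt (RCLike.re (inner ℂ (v x) (F x (v x)) : ℂ)) :=
          Finset.sum_le_sum fun x _ => posCS (F x) (hFpos x) (u x) (v x)
      _ ≤ Real.sqrt (∑ x, RCLike.re (inner ℂ (u x) (F x (u x)) : ℂ)) *
            Real.sqrt (∑ x, RCLike.re (inner ℂ (v x) (F x (v x)) : ℂ)) :=
          Real.sum_sqrt_mul_sqrt_le _ (fun x => (hFpos x).re_inner_nonneg_right _)
            (fun x => (hFpos x).re_inner_nonneg_right _)
      _ ≤ Real.sqrt (‖A' - A' * A'‖ * ‖φ‖ ^ 2) * Real.sqrt (‖B' - B' * B'‖ * ‖ψ‖ ^ 2) := by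
          gcongr
      _ = KA * KB * (‖φ‖ * ‖ψ‖) := by
          rw [Real.sqrt_mul (norm_nonneg _), Real.sqrt_mul (norm_nonneg _),
            Real.sqrt_sq (norm_nonneg _), Real.sqrt_sq (norm_nonneg _), hKA, hKB]
          ring
  refine ContinuousLinearMap.opNorm_le_bound _ (mul_nonneg hKA0 hKB0) fun ψ => ?_
  have h2 : ‖T ψ‖ ^ 2 ≤ KA * KB * (‖T ψ‖ * ‖ψ‖) := by
    calc ‖T ψ‖ ^ 2 = RCLike.re (inner ℂ (T ψ) (T ψ) : ℂ) := (inner_self_eq_norm_sq _).symm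
      _ ≤ ‖(inner ℂ (T ψ) (T ψ) : ℂ)‖ := RCLike.re_le_norm _
      _ ≤ KA * KB * (‖T ψ‖ * ‖ψ‖) := main (T ψ) ψ
  by_cases h0 : ‖T ψ‖ = 0
  · rw [h0]
    positivity
  · have hpos : 0 < ‖T ψ‖ := (norm_nonneg _).lt_of_ne (Ne.symm h0)
    nlinarith [h2]

section MainHelpers

variable {H : Type*} [NormedAddCommGroup H] [InnerProductSpace ℂ H] [CompleteSpace H]

/-- Quadratic-form bound `re⟪x,Sx⟫ ≤ ‖x‖²` plus positivity gives `‖S - ½‖ ≤ ½`. -/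
private lemma half_norm_le (S : H →L[ℂ] H) (hS : S.IsPositive)
    (hb : ∀ x : H, RCLike.re (inner ℂ x (S x) : ℂ) ≤ ‖x‖ ^ 2) :
    ‖S - (1/2 : ℂ) • 1‖ ≤ 1/2 := by
  have hstar : star (1/2 : ℂ) = 1/2 := by
    rw [star_div₀, star_one]
    norm_num
  have hsa : IsSelfAdjoint (S - (1/2 : ℂ) • (1 : H →L[ℂ] H)) := by
    have h1 : IsSelfAdjoint ((1/2 : ℂ) • (1 : H →L[ℂ] H)) := by
      rw [IsSelfAdjoint, star_smul, star_one, hstar]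
    exact hS.isSelfAdjoint.sub h1
  refine norm_le_of_sa_bound _ hsa (by norm_num) fun x => ?_
  have hre : RCLike.re (inner ℂ x ((S - (1/2 : ℂ) • 1) x) : ℂ)
      = RCLike.re (inner ℂ x (S x) : ℂ) - (1/2) * ‖x‖ ^ 2 := by
    have : (inner ℂ x ((S - (1/2 : ℂ) • 1) x) : ℂ)
        = inner ℂ x (S x) - (1/2 : ℂ) * inner ℂ x x := by
      simp [ContinuousLinearMap.sub_apply, ContinuousLinearMap.smul_apply,
        ContinuousLinearMap.one_apply, inner_sub_right, inner_smul_right]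
    rw [this, map_sub]
    congr 1
    have him : RCLike.im (inner ℂ x x : ℂ) = 0 := inner_self_im x
    have hree : RCLike.re (inner ℂ x x : ℂ) = ‖x‖ ^ 2 := inner_self_eq_norm_sq x
    rw [RCLike.mul_re]
    simp [him, hree]
    rw [← Complex.ofReal_pow, Complex.ofReal_re]
  rw [hre, abs_le]
  have h0 := hS.re_inner_nonneg_right x
  have h1 := hb x
  constructor <;> linarith

end MainHelpers

private lemma pos_norm_le_one {H : Type*} [NormedAddCommGroup H] [InnerProductSpace ℂ H]
    [CompleteSpace H] (S : H →L[ℂ] H) (hS : S.IsPositive)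
    (hb : ∀ x : H, RCLike.re (inner ℂ x (S x) : ℂ) ≤ ‖x‖ ^ 2) : ‖S‖ ≤ 1 :=
  norm_le_of_sa_bound S hS.isSelfAdjoint zero_le_one fun x => abs_le.mpr
    ⟨by nlinarith [hS.re_inner_nonneg_right x, sq_nonneg ‖x‖], by simpa using hb x⟩

private lemma one_sub_norm_le_one {H : Type*} [NormedAddCommGroup H] [InnerProductSpace ℂ H]
    [CompleteSpace H] (S : H →L[ℂ] H) (hS : S.IsPositive)
    (hb : ∀ x : H, RCLike.re (inner ℂ x (S x) : ℂ) ≤ ‖x‖ ^ 2) : ‖(1 : H →L[ℂ] H) - S‖ ≤ 1 := by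
  have h1 : IsSelfAdjoint (1 : H →L[ℂ] H) := by rw [IsSelfAdjoint, star_one]
  refine norm_le_of_sa_bound _ (h1.sub hS.isSelfAdjoint) zero_le_one fun x => ?_
  have hre : RCLike.re (inner ℂ x (((1 : H →L[ℂ] H) - S) x) : ℂ)
      = ‖x‖ ^ 2 - RCLike.re (inner ℂ x (S x) : ℂ) := by
    have : (inner ℂ x (((1 : H →L[ℂ] H) - S) x) : ℂ) = inner ℂ x x - inner ℂ x (S x) := by
      simp [ContinuousLinearMap.sub_apply, ContinuousLinearMap.one_apply, inner_sub_right]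
    rw [this, map_sub, inner_self_eq_norm_sq]
  rw [hre, abs_le]
  have h0 := hS.re_inner_nonneg_right x
  have h2 := hb x
  constructor <;> nlinarith

/-- Main theorem: Heisenberg uncertainty tradeoff for simultaneous measurement
of two arbitrary POVMs. -/
theorem uncertainty_tradeoff_main {H : Type*} [NormedAddCommGroup H]
    [InnerProductSpace ℂ H] [CompleteSpace H]
    {ΩA ΩB Ω : Type*} [Fintype ΩA] [Fintype ΩB] [Fintype Ω]
    [Nonempty ΩA] [Nonempty ΩB] [DecidableEq ΩA] [DecidableEq ΩB]
    (A : ΩA → (H →L[ℂ] H)) (B : ΩB → (H →L[ℂ] H))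
    (hApos : ∀ a, (A a).IsPositive) (hAsum : ∑ a, A a = 1)
    (hBpos : ∀ b, (B b).IsPositive) (hBsum : ∑ b, B b = 1)
    (F : Ω → (H →L[ℂ] H)) (hFpos : ∀ x, (F x).IsPositive) (hFsum : ∑ x, F x = 1)
    (fA : Ω → ΩA) (fB : Ω → ΩB)
    (α β VA VB : ℝ)
    (hα : α = ⨆ a, ‖(∑ x ∈ Finset.univ.filter (fun x => fA x = a), F x) - A a‖)
    (hβ : β = ⨆ b, ‖(∑ x ∈ Finset.univ.filter (fun x => fB x = b), F x) - B b‖)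
    (hVA : VA = ⨆ a, ‖A a - (A a) ^ 2‖) (hVB : VB = ⨆ b, ‖B b - (B b) ^ 2‖) :
    2 * α * β + α + β +
        2 * Real.sqrt (2 * α + VA) * Real.sqrt (2 * β + VB) ≥
      ⨆ ab : ΩA × ΩB, ‖A ab.1 * B ab.2 - B ab.2 * A ab.1‖ := by
  rw [ge_iff_le]
  have hαle : ∀ a, ‖(∑ x ∈ Finset.univ.filter (fun x => fA x = a), F x) - A a‖ ≤ α := by
    intro a; rw [hα]
    exact le_ciSup (f := fun a => ‖(∑ x ∈ Finset.univ.filter (fun x => fA x = a), F x) - A a‖)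
      (Set.Finite.bddAbove (Set.finite_range _)) a
  have hβle : ∀ b, ‖(∑ x ∈ Finset.univ.filter (fun x => fB x = b), F x) - B b‖ ≤ β := by
    intro b; rw [hβ]
    exact le_ciSup (f := fun b => ‖(∑ x ∈ Finset.univ.filter (fun x => fB x = b), F x) - B b‖)
      (Set.Finite.bddAbove (Set.finite_range _)) b
  have hVAle : ∀ a, ‖A a - (A a) ^ 2‖ ≤ VA := by
    intro a; rw [hVA]
    exact le_ciSup (f := fun a => ‖A a - (A a) ^ 2‖)
      (Set.Finite.bddAbove (Set.finite_range _)) a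
  have hVBle : ∀ b, ‖B b - (B b) ^ 2‖ ≤ VB := by
    intro b; rw [hVB]
    exact le_ciSup (f := fun b => ‖B b - (B b) ^ 2‖)
      (Set.Finite.bddAbove (Set.finite_range _)) b
  have hα0 : 0 ≤ α := le_trans (norm_nonneg _) (hαle (Classical.arbitrary ΩA))
  have hβ0 : 0 ≤ β := le_trans (norm_nonneg _) (hβle (Classical.arbitrary ΩB))
  have hVA0 : 0 ≤ VA := le_trans (norm_nonneg _) (hVAle (Classical.arbitrary ΩA))
  have hVB0 : 0 ≤ VB := le_trans (norm_nonneg _) (hVBle (Classical.arbitrary ΩB))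
  -- pointwise quadratic-form bounds
  have hptA : ∀ (a : ΩA) (x : H), RCLike.re (inner ℂ x (A a x) : ℂ) ≤ ‖x‖ ^ 2 := by
    intro a x
    have hsum : ∑ a' : ΩA, RCLike.re (inner ℂ x (A a' x) : ℂ) = ‖x‖ ^ 2 := by
      rw [← map_sum, ← inner_sum, ← ContinuousLinearMap.sum_apply, hAsum,
        ContinuousLinearMap.one_apply, inner_self_eq_norm_sq]
    have h1 := Finset.single_le_sum (f := fun a' => RCLike.re (inner ℂ x (A a' x) : ℂ))
      (fun a' _ => (hApos a').re_inner_nonneg_right x) (Finset.mem_univ a)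
    rw [hsum] at h1
    exact h1
  have hptB : ∀ (b : ΩB) (x : H), RCLike.re (inner ℂ x (B b x) : ℂ) ≤ ‖x‖ ^ 2 := by
    intro b x
    have hsum : ∑ b' : ΩB, RCLike.re (inner ℂ x (B b' x) : ℂ) = ‖x‖ ^ 2 := by
      rw [← map_sum, ← inner_sum, ← ContinuousLinearMap.sum_apply, hBsum,
        ContinuousLinearMap.one_apply, inner_self_eq_norm_sq]
    have h1 := Finset.single_le_sum (f := fun b' => RCLike.re (inner ℂ x (B b' x) : ℂ))
      (fun b' _ => (hBpos b').re_inner_nonneg_right x) (Finset.mem_univ b)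
    rw [hsum] at h1
    exact h1
  have hptF : ∀ (s : Finset Ω) (x : H),
      RCLike.re (inner ℂ x ((∑ y ∈ s, F y) x) : ℂ) ≤ ‖x‖ ^ 2 := by
    intro s x
    have h1 : RCLike.re (inner ℂ x ((∑ y ∈ s, F y) x) : ℂ)
        = ∑ y ∈ s, RCLike.re (inner ℂ x (F y x) : ℂ) := by
      rw [ContinuousLinearMap.sum_apply, inner_sum, map_sum]
    have h2 : ∑ y : Ω, RCLike.re (inner ℂ x (F y x) : ℂ) = ‖x‖ ^ 2 := by
      rw [← map_sum, ← inner_sum, ← ContinuousLinearMap.sum_apply, hFsum,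
        ContinuousLinearMap.one_apply, inner_self_eq_norm_sq]
    rw [h1, ← h2]
    exact Finset.sum_le_sum_of_subset_of_nonneg (Finset.subset_univ s)
      (fun y _ _ => (hFpos y).re_inner_nonneg_right x)
  apply ciSup_le
  rintro ⟨a, b⟩
  set A' : H →L[ℂ] H := ∑ x ∈ Finset.univ.filter (fun x => fA x = a), F x with hA'd
  set B' : H →L[ℂ] H := ∑ x ∈ Finset.univ.filter (fun x => fB x = b), F x with hB'd
  set G : H →L[ℂ] H := ∑ x ∈ Finset.univ.filter (fun x => fA x = a ∧ fB x = b), F x with hGd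
  set X : H →L[ℂ] H := A' - A a with hXd
  set Y : H →L[ℂ] H := B' - B b with hYd
  have hA'pos : A'.IsPositive := sum_isPositive _ _ hFpos
  have hB'pos : B'.IsPositive := sum_isPositive _ _ hFpos
  have hGpos : G.IsPositive := sum_isPositive _ _ hFpos
  have hXle : ‖X‖ ≤ α := hαle a
  have hYle : ‖Y‖ ≤ β := hβle b
  have hA'n : ‖A'‖ ≤ 1 := pos_norm_le_one _ hA'pos (fun x => hptF _ x)
  have hB'n : ‖B'‖ ≤ 1 := pos_norm_le_one _ hB'pos (fun x => hptF _ x)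
  have h1A : ‖(1 : H →L[ℂ] H) - A a‖ ≤ 1 := one_sub_norm_le_one _ (hApos a) (hptA a)
  have h1B : ‖(1 : H →L[ℂ] H) - B b‖ ≤ 1 := one_sub_norm_le_one _ (hBpos b) (hptB b)
  have hAhalf : ‖A a - (1/2 : ℂ) • 1‖ ≤ 1/2 := half_norm_le _ (hApos a) (hptA a)
  have hBhalf : ‖B b - (1/2 : ℂ) • 1‖ ≤ 1/2 := half_norm_le _ (hBpos b) (hptB b)
  -- commutator shift identities
  have hswap : ∀ S W : H →L[ℂ] H, W * ((1/2 : ℂ) • 1) = ((1/2 : ℂ) • 1) * W := by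
    intro S W; rw [mul_smul_comm, smul_mul_assoc, one_mul, mul_one]
  have comm_half : ∀ S W : H →L[ℂ] H,
      W * S - S * W = W * (S - (1/2 : ℂ) • 1) - (S - (1/2 : ℂ) • 1) * W := by
    intro S W
    rw [mul_sub, sub_mul, hswap S W]
    abel
  have comm_half' : ∀ S W : H →L[ℂ] H,
      S * W - W * S = (S - (1/2 : ℂ) • 1) * W - W * (S - (1/2 : ℂ) • 1) := by
    intro S W
    rw [mul_sub, sub_mul, hswap S W]
    abel
  -- term 1
  have t1 : ‖Y * A a - A a * Y‖ ≤ β := by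
    have hid : Y * A a - A a * Y
        = Y * (A a - (1/2 : ℂ) • 1) - (A a - (1/2 : ℂ) • 1) * Y := comm_half (A a) Y
    calc ‖Y * A a - A a * Y‖
        ≤ ‖Y * (A a - (1/2 : ℂ) • 1)‖ + ‖(A a - (1/2 : ℂ) • 1) * Y‖ := by
          rw [hid]; exact norm_sub_le _ _
      _ ≤ ‖Y‖ * ‖A a - (1/2 : ℂ) • 1‖ + ‖A a - (1/2 : ℂ) • 1‖ * ‖Y‖ :=
          add_le_add (norm_mul_le _ _) (norm_mul_le _ _)
      _ ≤ β * (1/2) + (1/2) * β :=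
          add_le_add (mul_le_mul hYle hAhalf (norm_nonneg _) hβ0)
            (mul_le_mul hAhalf hYle (norm_nonneg _) (by norm_num))
      _ = β := by ring
  -- term 2
  have t2 : ‖B b * X - X * B b‖ ≤ α := by
    have hid : B b * X - X * B b
        = (B b - (1/2 : ℂ) • 1) * X - X * (B b - (1/2 : ℂ) • 1) := comm_half' (B b) X
    calc ‖B b * X - X * B b‖
        ≤ ‖(B b - (1/2 : ℂ) • 1) * X‖ + ‖X * (B b - (1/2 : ℂ) • 1)‖ := by
          rw [hid]; exact norm_sub_le _ _
      _ ≤ ‖B b - (1/2 : ℂ) • 1‖ * ‖X‖ + ‖X‖ * ‖B b - (1/2 : ℂ) • 1‖ :=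
          add_le_add (norm_mul_le _ _) (norm_mul_le _ _)
      _ ≤ (1/2) * α + α * (1/2) :=
          add_le_add (mul_le_mul hBhalf hXle (norm_nonneg _) (by norm_num))
            (mul_le_mul hXle hBhalf (norm_nonneg _) hα0)
      _ = α := by ring
  -- term 3
  have t3 : ‖Y * X - X * Y‖ ≤ β * α + α * β := by
    calc ‖Y * X - X * Y‖ ≤ ‖Y * X‖ + ‖X * Y‖ := norm_sub_le _ _
      _ ≤ ‖Y‖ * ‖X‖ + ‖X‖ * ‖Y‖ := add_le_add (norm_mul_le _ _) (norm_mul_le _ _)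
      _ ≤ β * α + α * β :=
          add_le_add (mul_le_mul hYle hXle (norm_nonneg _) hβ0)
            (mul_le_mul hXle hYle (norm_nonneg _) hα0)
  -- term 4
  have hcb : ‖A' * B' - G‖ ≤ Real.sqrt ‖A' - A' * A'‖ * Real.sqrt ‖B' - B' * B'‖ :=
    core_bound F hFpos hFsum (fun x => fA x = a) (fun x => fB x = b)
  have hstarT : ‖B' * A' - G‖ = ‖A' * B' - G‖ := by
    have hs : B' * A' - G = star (A' * B' - G) := by
      rw [star_sub, star_mul, hA'pos.isSelfAdjoint.star_eq, hB'pos.isSelfAdjoint.star_eq, hGpos.isSelfAdjoint.star_eq]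
    rw [hs, norm_star]
  have hnA : ‖A' - A' * A'‖ ≤ 2 * α + VA := by
    have hid : A' - A' * A' = (A a - A a * A a) + X * (1 - A a) - A' * X := by
      rw [hXd]; noncomm_ring
    have hVa : ‖A a - A a * A a‖ ≤ VA := by
      have := hVAle a; rwa [pow_two] at this
    calc ‖A' - A' * A'‖ ≤ ‖(A a - A a * A a) + X * (1 - A a)‖ + ‖A' * X‖ := by
          rw [hid]; exact norm_sub_le _ _
      _ ≤ ‖A a - A a * A a‖ + ‖X * (1 - A a)‖ + ‖A' * X‖ :=
          add_le_add_left (norm_add_le _ _) _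
      _ ≤ ‖A a - A a * A a‖ + ‖X‖ * ‖(1 : H →L[ℂ] H) - A a‖ + ‖A'‖ * ‖X‖ :=
          add_le_add (add_le_add_right (norm_mul_le _ _) _) (norm_mul_le _ _)
      _ ≤ VA + α * 1 + 1 * α :=
          add_le_add (add_le_add hVa
            (mul_le_mul hXle h1A (norm_nonneg _) hα0))
            (mul_le_mul hA'n hXle (norm_nonneg _) zero_le_one)
      _ = 2 * α + VA := by ring
  have hnB : ‖B' - B' * B'‖ ≤ 2 * β + VB := by
    have hid : B' - B' * B' = (B b - B b * B b) + Y * (1 - B b) - B' * Y := by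
      rw [hYd]; noncomm_ring
    have hVb : ‖B b - B b * B b‖ ≤ VB := by
      have := hVBle b; rwa [pow_two] at this
    calc ‖B' - B' * B'‖ ≤ ‖(B b - B b * B b) + Y * (1 - B b)‖ + ‖B' * Y‖ := by
          rw [hid]; exact norm_sub_le _ _
      _ ≤ ‖B b - B b * B b‖ + ‖Y * (1 - B b)‖ + ‖B' * Y‖ :=
          add_le_add_left (norm_add_le _ _) _
      _ ≤ ‖B b - B b * B b‖ + ‖Y‖ * ‖(1 : H →L[ℂ] H) - B b‖ + ‖B'‖ * ‖Y‖ :=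
          add_le_add (add_le_add_right (norm_mul_le _ _) _) (norm_mul_le _ _)
      _ ≤ VB + β * 1 + 1 * β :=
          add_le_add (add_le_add hVb
            (mul_le_mul hYle h1B (norm_nonneg _) hβ0))
            (mul_le_mul hB'n hYle (norm_nonneg _) zero_le_one)
      _ = 2 * β + VB := by ring
  have t4 : ‖A' * B' - B' * A'‖
      ≤ 2 * Real.sqrt (2 * α + VA) * Real.sqrt (2 * β + VB) := by
    have hdecomp : A' * B' - B' * A' = (A' * B' - G) - (B' * A' - G) := by abel
    have s1 : Real.sqrt ‖A' - A' * A'‖ ≤ Real.sqrt (2 * α + VA) := Real.sqrt_le_sqrt hnA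
    have s2 : Real.sqrt ‖B' - B' * B'‖ ≤ Real.sqrt (2 * β + VB) := Real.sqrt_le_sqrt hnB
    have hmul : Real.sqrt ‖A' - A' * A'‖ * Real.sqrt ‖B' - B' * B'‖
        ≤ Real.sqrt (2 * α + VA) * Real.sqrt (2 * β + VB) :=
      mul_le_mul s1 s2 (Real.sqrt_nonneg _) (Real.sqrt_nonneg _)
    calc ‖A' * B' - B' * A'‖ ≤ ‖A' * B' - G‖ + ‖B' * A' - G‖ := by
          rw [hdecomp]; exact norm_sub_le _ _
      _ = 2 * ‖A' * B' - G‖ := by rw [hstarT]; ring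
      _ ≤ 2 * (Real.sqrt ‖A' - A' * A'‖ * Real.sqrt ‖B' - B' * B'‖) := by linarith
      _ ≤ 2 * (Real.sqrt (2 * α + VA) * Real.sqrt (2 * β + VB)) := by linarith
      _ = 2 * Real.sqrt (2 * α + VA) * Real.sqrt (2 * β + VB) := by ring
  have hfinal : A a * B b - B b * A a
      = (Y * A a - A a * Y) + (B b * X - X * B b) + (Y * X - X * Y)
        + (A' * B' - B' * A') := by
    rw [hXd, hYd]; noncomm_ring
  calc ‖A a * B b - B b * A a‖
      ≤ ‖Y * A a - A a * Y‖ + ‖B b * X - X * B b‖ + ‖Y * X - X * Y‖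
        + ‖A' * B' - B' * A'‖ := by
        rw [hfinal]
        exact le_trans (norm_add_le _ _) (add_le_add
          (le_trans (norm_add_le _ _) (add_le_add (norm_add_le _ _) le_rfl)) le_rfl)
    _ ≤ β + α + (β * α + α * β)
        + 2 * Real.sqrt (2 * α + VA) * Real.sqrt (2 * β + VB) :=
        add_le_add (add_le_add (add_le_add t1 t2) t3) t4
    _ ≤ 2 * α * β + α + β + 2 * Real.sqrt (2 * α + VA) * Real.sqrt (2 * β + VB) := by
        linarith
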